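/- Let E be a directed graph, K a field, x ∈ ∂E a path that is not rational, and a ∈ (K^*)^{E^1}. Then the twisted Chen module V^a_{[x]} is a ℤ-graded L_K(E)-module: writing [x]_k = {y ∈ [x] : y ∼_k x}, the class [x] is the disjoint union of the sets [x]_k over k ∈ ℤ, and with V_{[x],k} the K-span of [x]_k one has V^a_{[x]} = ⊕_{k∈ℤ} V_{[x],k} and (L_K(E))_m · V_{[x],k} ⊆ V_{[x],m+k} for all m, k ∈ ℤ. -/

import Mathlib

open scoped Classical

/-- A directed graph: vertices, edges, source and range maps. -/
structure DirGraph : Type 1 where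
  V : Type
  E : Type
  s : E → V
  r : E → V

namespace DirGraph

variable (G : DirGraph)

/-- A finite path: a source vertex together with a compatible list of edges
(the empty list gives the path of length 0 at `src`). -/
structure FinPath where
  src : G.V
  edges : List G.E
  src_eq : ∀ e ∈ edges.head?, G.s e = src
  chain : edges.Chain' (fun e f => G.r e = G.s f)

variable {G}

/-- The range of a finite path. -/
def FinPath.rng (μ : G.FinPath) : G.V :=
  ((μ.edges.getLast?).map G.r).getD μ.src

/-- The length of a finite path. -/
def FinPath.length (μ : G.FinPath) : ℕ := μ.edges.length

variable (G)

/-- An infinite path. -/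
structure InfPath where
  edges : ℕ → G.E
  chain : ∀ n, G.r (edges n) = G.s (edges (n + 1))

/-- The source of an infinite path. -/
def InfPath.src {G : DirGraph} (p : G.InfPath) : G.V := G.s (p.edges 0)

def IsSink (v : G.V) : Prop := ∀ e, G.s e ≠ v

def IsInfEmitter (v : G.V) : Prop := {e | G.s e = v}.Infinite

def IsSingular (v : G.V) : Prop := IsSink G v ∨ IsInfEmitter G v

/-- Boundary paths: infinite paths, together with finite paths ending in a singular vertex. -/
def BPath : Type := {x : G.FinPath ⊕ G.InfPath // ∀ μ, x = Sum.inl μ → IsSingular G μ.rng}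

variable {G}

/-- The source of a boundary path. -/
def BPath.src (x : G.BPath) : G.V :=
  match x.1 with
  | Sum.inl μ => μ.src
  | Sum.inr p => p.src

def BPath.IsInfinite (x : G.BPath) : Prop := ∃ p, x.1 = Sum.inr p

/-- `IsCat μ p x` means `x = μ p`, i.e. `x` is the concatenation of the finite path `μ`
with the boundary path `p` (in particular `r(μ) = s(p)`). -/
def IsCat (μ : G.FinPath) (p x : G.BPath) : Prop :=
  μ.rng = p.src ∧
  match p.1, x.1 with
  | Sum.inl q, Sum.inl ξ => ξ.src = μ.src ∧ ξ.edges = μ.edges ++ q.edges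
  | Sum.inr q, Sum.inr ξ =>
      (∀ (i : ℕ) (h : i < μ.edges.length), ξ.edges i = μ.edges.get ⟨i, h⟩) ∧
      (∀ i : ℕ, ξ.edges (μ.edges.length + i) = q.edges i)
  | _, _ => False

/-- `x ∼_k y` : tail equivalence with lag `k`. -/
def TailEqLag (x y : G.BPath) (k : ℤ) : Prop :=
  ∃ (μ ν : G.FinPath) (p : G.BPath),
    IsCat μ p x ∧ IsCat ν p y ∧ (μ.length : ℤ) - (ν.length : ℤ) = k

/-- Tail equivalence. -/
def TailEq (x y : G.BPath) : Prop := ∃ k, TailEqLag x y k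

/-- The tail-equivalence class (orbit) of a boundary path. -/
def orbit (x : G.BPath) : Set G.BPath := {y | TailEq y x}

/-- A closed path: positive length, same source and range. -/
def FinPath.IsClosed (c : G.FinPath) : Prop := 0 < c.length ∧ c.rng = c.src

/-- A boundary path is rational if it is tail equivalent to `c^∞` for some closed path `c`;
here `c^∞` is characterized as the unique boundary path `p` with `p = c p`. -/
def IsRational (x : G.BPath) : Prop :=
  ∃ (c : G.FinPath) (p : G.BPath), 0 < c.length ∧ IsCat c p p ∧ TailEq x p

/-- A simple closed path: a closed path which is not a proper power of a closed path. -/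
def FinPath.IsSimpleClosed (c : G.FinPath) : Prop :=
  c.IsClosed ∧
    ¬ ∃ (d : G.FinPath) (n : ℕ), 2 ≤ n ∧ d.IsClosed ∧ c.src = d.src ∧
        c.edges = (List.replicate n d.edges).flatten

/-- A cycle: a closed path passing through no vertex twice. -/
def FinPath.IsCycle (c : G.FinPath) : Prop := c.IsClosed ∧ (c.edges.map G.s).Nodup

/-- An exit for a finite path. -/
def FinPath.HasExit (c : G.FinPath) : Prop :=
  ∃ (i : ℕ) (h : i < c.edges.length) (e : G.E),
    G.s e = G.s (c.edges.get ⟨i, h⟩) ∧ e ≠ c.edges.get ⟨i, h⟩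

/-- `c` is a rotation of `d`. -/
def FinPath.IsRotationOf (c d : G.FinPath) : Prop := ∃ i, c.edges = d.edges.rotate i

/-- A maximal cycle: a cycle such that any cycle from which there is a finite path to its
source is a rotation of it. -/
def FinPath.IsMaxCycle (c : G.FinPath) : Prop :=
  c.IsCycle ∧ ∀ d : G.FinPath, d.IsCycle →
    (∃ μ : G.FinPath, μ.src = d.src ∧ μ.rng = c.src) → d.IsRotationOf c

/-- A maximal sink: a sink with no finite path from the source of any cycle to it. -/
def IsMaxSink (G : DirGraph) (v : G.V) : Prop :=
  IsSink G v ∧ ¬ ∃ (d μ : G.FinPath), d.IsCycle ∧ μ.src = d.src ∧ μ.rng = v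

/-- A graph is row-finite if every vertex emits finitely many edges. -/
def RowFinite (G : DirGraph) : Prop := ∀ v : G.V, {e | G.s e = v}.Finite

/-- The set of predecessors of a vertex. -/
def preds (G : DirGraph) (v : G.V) : Set G.V := {w | ∃ μ : G.FinPath, μ.src = w ∧ μ.rng = v}

/-- The finite path of length 0 at a vertex. -/
def vertexPath (G : DirGraph) (v : G.V) : G.FinPath :=
  ⟨v, [], by intro e he; simp at he, List.isChain_nil⟩

/-- A singular vertex, seen as a boundary path. -/
def vertexBPath (G : DirGraph) (v : G.V) (h : IsSingular G v) : G.BPath :=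
  ⟨Sum.inl (vertexPath G v), by
    intro μ hμ
    injection hμ with h2
    subst h2
    exact h⟩

/-- The finite path consisting of a single edge. -/
def singleE (G : DirGraph) (e : G.E) : G.FinPath :=
  ⟨G.s e, [e], by
    intro f hf
    simp only [List.head?_cons, Option.mem_def, Option.some.injEq] at hf
    subst hf
    rfl, List.isChain_singleton e⟩

/-- `a_μ`: the product of the values of `a` along a finite path. -/
def aval {G : DirGraph} {K : Type} [Field K] (a : G.E → K) (μ : G.FinPath) : K :=
  (μ.edges.map a).prod

/-! ## The Leavitt path algebra -/

/-- Generators of the Leavitt path algebra: vertices, edges and ghost edges. -/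
inductive Gen (G : DirGraph) : Type
  | vtx : G.V → Gen G
  | edg : G.E → Gen G
  | ghd : G.E → Gen G

/-- The defining relations of the Leavitt path algebra. -/
inductive LRel (G : DirGraph) (K : Type) [Field K] :
    FreeAlgebra K (Gen G) → FreeAlgebra K (Gen G) → Prop
  | vv_eq (v : G.V) :
      LRel G K (FreeAlgebra.ι K (Gen.vtx v) * FreeAlgebra.ι K (Gen.vtx v))
        (FreeAlgebra.ι K (Gen.vtx v))
  | vv_ne {v w : G.V} (h : v ≠ w) :
      LRel G K (FreeAlgebra.ι K (Gen.vtx v) * FreeAlgebra.ι K (Gen.vtx w)) 0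
  | e1l (e : G.E) :
      LRel G K (FreeAlgebra.ι K (Gen.vtx (G.s e)) * FreeAlgebra.ι K (Gen.edg e))
        (FreeAlgebra.ι K (Gen.edg e))
  | e1r (e : G.E) :
      LRel G K (FreeAlgebra.ι K (Gen.edg e) * FreeAlgebra.ι K (Gen.vtx (G.r e)))
        (FreeAlgebra.ι K (Gen.edg e))
  | e2l (e : G.E) :
      LRel G K (FreeAlgebra.ι K (Gen.vtx (G.r e)) * FreeAlgebra.ι K (Gen.ghd e))
        (FreeAlgebra.ι K (Gen.ghd e))
  | e2r (e : G.E) :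
      LRel G K (FreeAlgebra.ι K (Gen.ghd e) * FreeAlgebra.ι K (Gen.vtx (G.s e)))
        (FreeAlgebra.ι K (Gen.ghd e))
  | ck1_eq (e : G.E) :
      LRel G K (FreeAlgebra.ι K (Gen.ghd e) * FreeAlgebra.ι K (Gen.edg e))
        (FreeAlgebra.ι K (Gen.vtx (G.r e)))
  | ck1_ne {e f : G.E} (h : e ≠ f) :
      LRel G K (FreeAlgebra.ι K (Gen.ghd e) * FreeAlgebra.ι K (Gen.edg f)) 0
  | ck2 (v : G.V) (hfin : {e | G.s e = v}.Finite) (hne : ∃ e, G.s e = v) :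
      LRel G K (FreeAlgebra.ι K (Gen.vtx v))
        (∑ e ∈ hfin.toFinset, FreeAlgebra.ι K (Gen.edg e) * FreeAlgebra.ι K (Gen.ghd e))

/-- The Leavitt path algebra of `G` over `K`. -/
abbrev LPA (G : DirGraph) (K : Type) [Field K] : Type := RingQuot (LRel G K)

/-- The image of a vertex in the Leavitt path algebra. -/
def ofV (G : DirGraph) (K : Type) [Field K] (v : G.V) : LPA G K :=
  RingQuot.mkAlgHom K (LRel G K) (FreeAlgebra.ι K (Gen.vtx v))

/-- The image of an edge in the Leavitt path algebra. -/
def ofE (G : DirGraph) (K : Type) [Field K] (e : G.E) : LPA G K :=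
  RingQuot.mkAlgHom K (LRel G K) (FreeAlgebra.ι K (Gen.edg e))

/-- The image of a ghost edge in the Leavitt path algebra. -/
def ofG (G : DirGraph) (K : Type) [Field K] (e : G.E) : LPA G K :=
  RingQuot.mkAlgHom K (LRel G K) (FreeAlgebra.ι K (Gen.ghd e))

/-- The element `μ` of the Leavitt path algebra associated to a finite path `μ`. -/
def pathElem (G : DirGraph) (K : Type) [Field K] (μ : G.FinPath) : LPA G K :=
  ofV G K μ.src * (μ.edges.map (ofE G K)).prod

/-- The element `μ^*` of the Leavitt path algebra associated to a finite path `μ`. -/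
def pathStarElem (G : DirGraph) (K : Type) [Field K] (μ : G.FinPath) : LPA G K :=
  (μ.edges.reverse.map (ofG G K)).prod * ofV G K μ.src

/-- The degree-`n` homogeneous component of the canonical `ℤ`-grading of the Leavitt
path algebra: the span of the monomials `μ ν^*` with `|μ| - |ν| = n`. -/
def LPAdeg (G : DirGraph) (K : Type) [Field K] (n : ℤ) : Submodule K (LPA G K) :=
  Submodule.span K {x | ∃ μ ν : G.FinPath, μ.rng = ν.rng ∧
    (μ.length : ℤ) - (ν.length : ℤ) = n ∧ x = pathElem G K μ * pathStarElem G K ν}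

/-- `W` is a `ℤ`-grading making `M` a graded module over the canonically graded
Leavitt path algebra. -/
def IsModuleGrading (G : DirGraph) (K : Type) [Field K] (M : Type) [AddCommGroup M]
    [Module K M] [Module (LPA G K) M] (W : ℤ → Submodule K M) : Prop :=
  DirectSum.IsInternal W ∧
    ∀ (m k : ℤ) (a : LPA G K) (y : M), a ∈ LPAdeg G K m → y ∈ W k → a • y ∈ W (m + k)

/-- A set is graded (with respect to a grading `W`) if each of its elements is a finite sum
of homogeneous elements of the set. -/
def GradedCarrier {K M : Type} [Field K] [AddCommGroup M] [Module K M]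
    (W : ℤ → Submodule K M) (S : Set M) : Prop :=
  ∀ m ∈ S, ∃ l : List M, (∀ z ∈ l, z ∈ S ∧ ∃ k, z ∈ W k) ∧ l.sum = m

/-- A graded isomorphism between graded modules over the Leavitt path algebra. -/
def GradedIsoLPA (G : DirGraph) (K : Type) [Field K] (M N : Type)
    [AddCommGroup M] [AddCommGroup N] [Module K M] [Module K N]
    [Module (LPA G K) M] [Module (LPA G K) N]
    (W : ℤ → Submodule K M) (W' : ℤ → Submodule K N) : Prop :=
  ∃ f : M ≃ₗ[LPA G K] N, (∀ k, ∀ m ∈ W k, f m ∈ W' k) ∧ ∀ k, ∀ n ∈ W' k, f.symm n ∈ W k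

/-- A module over the Leavitt path algebra is unital if it is generated by the images of the
vertices. -/
def IsUnitalModule (G : DirGraph) (K : Type) [Field K] (M : Type) [AddCommGroup M]
    [Module (LPA G K) M] : Prop :=
  ∀ m : M, m ∈ Submodule.span (LPA G K) {y : M | ∃ (v : G.V) (m' : M), y = ofV G K v • m'}

/-! ## Chen modules, specified by a basis and the action of the generators -/

/-- A specification of the (twisted) Chen module attached to a boundary path `x`:
an `L_K(E)`-module `M` which is a `K'`-vector space with basis the tail-equivalence class
of `x`, the generators acting by the τ-twisted shift formulas. Here `K ⊆ K'` is a field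
extension and `τ : E¹ → K'` is a family of nonzero scalars. -/
structure ChenSpecT (G : DirGraph) (K K' : Type) [Field K] [Field K'] [Algebra K K']
    (τ : G.E → K') (x : G.BPath) (M : Type) [AddCommGroup M] [Module K' M]
    [Module (LPA G K) M] : Type where
  tau_ne : ∀ e, τ e ≠ 0
  basis : Module.Basis (orbit x) K' M
  act_v : ∀ (v : G.V) (p : orbit x),
    ofV G K v • basis p = if v = BPath.src (p : G.BPath) then basis p else 0
  act_e : ∀ (e : G.E) (p q : orbit x), IsCat (singleE G e) (p : G.BPath) (q : G.BPath) →
    ofE G K e • basis p = τ e • basis q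
  act_e_zero : ∀ (e : G.E) (p : orbit x),
    (¬ ∃ q : G.BPath, IsCat (singleE G e) (p : G.BPath) q) → ofE G K e • basis p = 0
  act_g : ∀ (e : G.E) (p q : orbit x), IsCat (singleE G e) (p : G.BPath) (q : G.BPath) →
    ofG G K e • basis q = (τ e)⁻¹ • basis p
  act_g_zero : ∀ (e : G.E) (q : orbit x),
    (¬ ∃ p : G.BPath, IsCat (singleE G e) p (q : G.BPath)) → ofG G K e • basis q = 0

/-- Specification of the Chen module `V_{[x]}^a` twisted by `a : E¹ → K^*`
(`a = 1` gives `V_{[x]}`). -/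
abbrev ChenSpec (G : DirGraph) (K : Type) [Field K] (a : G.E → K) (x : G.BPath) (M : Type)
    [AddCommGroup M] [Module K M] [Module (LPA G K) M] : Type :=
  ChenSpecT G K K a x M

/-- The canonical grading on a Chen module: the degree-`k` component is spanned by the basis
elements tail-equivalent to `x` with lag `k`. -/
def chenW {G : DirGraph} {K' : Type} [Field K'] {x : G.BPath} {M : Type}
    [AddCommGroup M] [Module K' M] (b : Module.Basis (orbit x) K' M) (k : ℤ) : Submodule K' M :=
  Submodule.span K' (⇑b '' {p : orbit x | TailEqLag (p : G.BPath) x k})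

/-! ## The module `K L_x` -/

/-- The set `L_x` of pairs `(y, k)` with `y ∼_k x`. -/
def Lset (G : DirGraph) (x : G.BPath) : Set (G.BPath × ℤ) := {yk | TailEqLag yk.1 x yk.2}

/-- The underlying `K`-vector space of the module `K L_x`, with basis `L_x`. -/
abbrev KLCarrier (G : DirGraph) (K : Type) [Field K] (x : G.BPath) : Type := (Lset G x) →₀ K

/-- Specification of the `L_K(E)`-module structure on `K L_x`, given by
`(μ ν^*) ⬝ (y, k) = (μ p, |μ| - |ν| + k)` when `y = ν p`, and `0` otherwise. The module
structure is encoded as a `K`-algebra homomorphism `ρ` to the endomorphism algebra. -/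
def KLSpec (G : DirGraph) (K : Type) [Field K] (x : G.BPath)
    (ρ : LPA G K →ₐ[K] Module.End K (KLCarrier G K x)) : Prop :=
  (∀ (μ ν : G.FinPath), μ.rng = ν.rng → ∀ (yk zk : Lset G x) (p : G.BPath),
      IsCat ν p (yk : G.BPath × ℤ).1 → IsCat μ p (zk : G.BPath × ℤ).1 →
      (zk : G.BPath × ℤ).2 = (yk : G.BPath × ℤ).2 + (μ.length : ℤ) - (ν.length : ℤ) →
      ρ (pathElem G K μ * pathStarElem G K ν) (Finsupp.single yk 1) = Finsupp.single zk 1) ∧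
  (∀ (μ ν : G.FinPath), μ.rng = ν.rng → ∀ yk : Lset G x,
      (¬ ∃ p : G.BPath, IsCat ν p (yk : G.BPath × ℤ).1) →
      ρ (pathElem G K μ * pathStarElem G K ν) (Finsupp.single yk 1) = 0)

/-- The canonical grading of `K L_x`: `(y, k)` is homogeneous of degree `k`. -/
noncomputable def KLgr (G : DirGraph) (K : Type) [Field K] (x : G.BPath) (k : ℤ) :
    Submodule K (KLCarrier G K x) :=
  Submodule.span K {m | ∃ yk : Lset G x, (yk : G.BPath × ℤ).2 = k ∧ m = Finsupp.single yk 1}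

end DirGraph
namespace DirGraph

variable {G : DirGraph}

theorem FinPath.ext' {μ ν : G.FinPath} (h1 : μ.src = ν.src) (h2 : μ.edges = ν.edges) :
    μ = ν := by
  cases μ; cases ν; simp_all

theorem BPath.ext' {p q : G.BPath} (h : p.1 = q.1) : p = q := Subtype.ext h

theorem InfPath.ext' {p q : G.InfPath} (h : p.edges = q.edges) : p = q := by
  cases p; cases q; simp_all

@[simp] theorem vertexPath_rng (v : G.V) : (vertexPath G v).rng = v := rfl

@[simp] theorem vertexPath_length (v : G.V) : (vertexPath G v).length = 0 := rfl

@[simp] theorem singleE_rng (e : G.E) : (singleE G e).rng = G.r e := rfl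

@[simp] theorem singleE_length (e : G.E) : (singleE G e).length = 1 := rfl

theorem isCat_id (p : G.BPath) : IsCat (vertexPath G p.src) p p := by
  refine ⟨rfl, ?_⟩
  obtain ⟨x1, hx⟩ := p
  cases x1 with
  | inl P => exact ⟨rfl, rfl⟩
  | inr P =>
    refine ⟨fun i h => absurd h (by simp [vertexPath]), fun i => by
      simp [vertexPath, Nat.zero_add]⟩

theorem isCat_of_nil {μ : G.FinPath} {p q : G.BPath} (h : IsCat μ p q)
    (hn : μ.edges = []) : p = q := by
  obtain ⟨h1, h2⟩ := h
  apply BPath.ext'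
  obtain ⟨p1, hp⟩ := p; obtain ⟨q1, hq⟩ := q
  cases p1 with
  | inl P =>
    cases q1 with
    | inl Q =>
      obtain ⟨e1, e2⟩ := h2
      simp only [Sum.inl.injEq]
      refine (FinPath.ext' ?_ ?_).symm
      · rw [e1]
        have : μ.rng = μ.src := by simp [FinPath.rng, hn]
        rw [← this]; exact h1
      · rw [e2, hn]; rfl
    | inr Q => exact h2.elim
  | inr P =>
    cases q1 with
    | inl Q => exact h2.elim
    | inr Q =>
      simp only [Sum.inr.injEq]
      refine (InfPath.ext' (funext fun i => ?_)).symm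
      have := h2.2 i
      rw [hn] at this
      simpa using this

theorem IsCat.src_cat {μ : G.FinPath} {p q : G.BPath} (h : IsCat μ p q) :
    q.src = μ.src := by
  obtain ⟨h1, h2⟩ := h
  obtain ⟨p1, hp⟩ := p; obtain ⟨q1, hq⟩ := q
  cases p1 with
  | inl P =>
    cases q1 with
    | inl Q => exact h2.1
    | inr Q => exact h2.elim
  | inr P =>
    cases q1 with
    | inl Q => exact h2.elim
    | inr Q =>
      cases he : μ.edges with
      | nil =>
        have h0 := h2.2 0
        rw [he] at h0
        show G.s (Q.edges 0) = μ.src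
        have hr : μ.rng = μ.src := by simp [FinPath.rng, he]
        have : G.s (Q.edges 0) = G.s (P.edges 0) := by
          rw [show Q.edges 0 = P.edges 0 from h0]
        rw [this]
        exact h1.symm.trans hr |>.symm ▸ rfl
      | cons e t =>
        have hlt : 0 < μ.edges.length := by simp [he]
        have h0 := h2.1 0 hlt
        show G.s (Q.edges 0) = μ.src
        have hge : μ.edges.get ⟨0, hlt⟩ = e := by simp [he]
        rw [h0, hge]
        exact μ.src_eq e (by rw [he]; rfl)

theorem isCat_single_unique {e f : G.E} {p p' q : G.BPath}
    (h : IsCat (singleE G e) p q) (h' : IsCat (singleE G f) p' q) :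
    e = f ∧ p = p' := by
  obtain ⟨h1, h2⟩ := h
  obtain ⟨h1', h2'⟩ := h'
  obtain ⟨p1, hp⟩ := p; obtain ⟨p1', hp'⟩ := p'; obtain ⟨q1, hq⟩ := q
  cases q1 with
  | inl Q =>
    cases p1 with
    | inr P => exact h2.elim
    | inl P =>
      cases p1' with
      | inr P' => exact h2'.elim
      | inl P' =>
        have he : Q.edges = e :: P.edges := h2.2
        have hf : Q.edges = f :: P'.edges := h2'.2
        rw [he] at hf
        injection hf with hef hPP
        refine ⟨hef, BPath.ext' ?_⟩
        simp only [Sum.inl.injEq]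
        refine FinPath.ext' ?_ hPP
        have hs : G.r e = P.src := h1
        have hs' : G.r f = P'.src := h1'
        rw [← hs, ← hs', hef]
  | inr Q =>
    cases p1 with
    | inl P => exact h2.elim
    | inr P =>
      cases p1' with
      | inl P' => exact h2'.elim
      | inr P' =>
        have he0 : Q.edges 0 = e := h2.1 0 (by simp [singleE])
        have hf0 : Q.edges 0 = f := h2'.1 0 (by simp [singleE])
        refine ⟨he0.symm.trans hf0, BPath.ext' ?_⟩
        simp only [Sum.inr.injEq]
        refine InfPath.ext' (funext fun i => ?_)
        have a1 := h2.2 i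
        have a2 := h2'.2 i
        rw [← a1, ← a2]
        rfl

/-- Prepend an edge to a finite path. -/
def consPath (e : G.E) (μ : G.FinPath) (h : G.r e = μ.src) : G.FinPath where
  src := G.s e
  edges := e :: μ.edges
  src_eq := by
    intro f hf
    simp only [List.head?_cons, Option.mem_def, Option.some.injEq] at hf
    subst hf; rfl
  chain := List.isChain_cons.mpr ⟨fun f hf => h.trans (μ.src_eq f hf).symm, μ.chain⟩

theorem consPath_rng (e : G.E) (μ : G.FinPath) (h : G.r e = μ.src) :
    (consPath e μ h).rng = μ.rng := by
  cases hl : μ.edges with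
  | nil => simp [consPath, FinPath.rng, hl, h]
  | cons a t =>
    rcases hgl : (a :: t).getLast? with _ | y
    · simp at hgl
    · simp [consPath, FinPath.rng, hl, hgl]

@[simp] theorem consPath_length (e : G.E) (μ : G.FinPath) (h : G.r e = μ.src) :
    (consPath e μ h).length = μ.length + 1 := by
  simp [consPath, FinPath.length]

theorem isCat_cons {e : G.E} {μ : G.FinPath} {p q r0 : G.BPath}
    (h1 : IsCat (singleE G e) q r0) (h2 : IsCat μ p q) :
    ∃ τ : G.FinPath, τ.length = μ.length + 1 ∧ IsCat τ p r0 := by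
  have hre : G.r e = μ.src := by
    have a1 : G.r e = q.src := h1.1
    rw [a1, h2.src_cat]
  refine ⟨consPath e μ hre, consPath_length .., ?_⟩
  refine ⟨(consPath_rng ..).trans h2.1, ?_⟩
  obtain ⟨hq1, hm1⟩ := h1
  obtain ⟨hq2, hm2⟩ := h2
  obtain ⟨p1, hp⟩ := p; obtain ⟨q1, hq⟩ := q; obtain ⟨r1, hr⟩ := r0
  cases q1 with
  | inl Q =>
    cases p1 with
    | inr P => exact hm2.elim
    | inl P =>
      cases r1 with
      | inr R => exact hm1.elim
      | inl R =>
        refine ⟨hm1.1, ?_⟩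
        show R.edges = (e :: μ.edges) ++ P.edges
        have : R.edges = e :: Q.edges := hm1.2
        rw [this, hm2.2]
        rfl
  | inr Q =>
    cases p1 with
    | inl P => exact hm2.elim
    | inr P =>
      cases r1 with
      | inl R => exact hm1.elim
      | inr R =>
        constructor
        · intro i hi
          match i, hi with
          | 0, _ =>
            have := hm1.1 0 (by simp [singleE])
            simpa [singleE, consPath] using this
          | (j+1), hj =>
            have hR : R.edges (1 + j) = Q.edges j := hm1.2 j
            have hj' : j < μ.edges.length := by
              simpa [consPath] using hj
            have hQ : Q.edges j = μ.edges.get ⟨j, hj'⟩ := hm2.1 j hj'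
            have hcomm : R.edges (j + 1) = R.edges (1 + j) := by rw [Nat.add_comm]
            rw [hcomm, hR, hQ]
            rfl
        · intro i
          show R.edges ((e :: μ.edges).length + i) = P.edges i
          have harith : (e :: μ.edges).length + i = 1 + (μ.edges.length + i) := by
            simp; omega
          rw [harith]
          exact (hm1.2 (μ.edges.length + i)).trans (hm2.2 i)

theorem rng_mk (v : G.V) (l : List G.E) (h1 h2) :
    (FinPath.mk v l h1 h2).rng = ((l.getLast?).map G.r).getD v := rfl

theorem isCat_strip {μ : G.FinPath} {p q : G.BPath} {e : G.E} {t : List G.E}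
    (h : IsCat μ p q) (he : μ.edges = e :: t) :
    ∃ (pm : G.BPath) (τ : G.FinPath), τ.edges = t ∧ IsCat (singleE G e) pm q ∧
      IsCat τ p pm := by
  have hch : List.Chain' (fun a b => G.r a = G.s b) (e :: t) := he ▸ μ.chain
  have hc1 := List.isChain_cons.mp hch
  set τ : G.FinPath := ⟨G.r e, t, fun f hf => (hc1.1 f hf).symm, hc1.2⟩ with hτdef
  have hτrng : τ.rng = μ.rng := by
    cases t with
    | nil =>
      rw [hτdef, rng_mk]
      simp [FinPath.rng, he]
    | cons a t' =>
      rw [hτdef, rng_mk]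
      rcases hgl : (a :: t').getLast? with _ | y
      · simp at hgl
      · simp [FinPath.rng, he, hgl]
  have hsrc : G.s e = μ.src := μ.src_eq e (by rw [he]; rfl)
  obtain ⟨h1, h2⟩ := h
  obtain ⟨p1, hp⟩ := p; obtain ⟨q1, hq⟩ := q
  cases q1 with
  | inl Q =>
    cases p1 with
    | inr P => exact h2.elim
    | inl P =>
      have hQE : Q.edges = e :: (t ++ P.edges) := by
        rw [h2.2, he]; rfl
      have hchQ : List.Chain' (fun a b => G.r a = G.s b) (e :: (t ++ P.edges)) :=
        hQE ▸ Q.chain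
      have hc2 := List.isChain_cons.mp hchQ
      set pmF : G.FinPath :=
        ⟨G.r e, t ++ P.edges, fun f hf => (hc2.1 f hf).symm, hc2.2⟩ with hpmdef
      have hpmrng : pmF.rng = Q.rng := by
        show (((t ++ P.edges).getLast?).map G.r).getD (G.r e) = ((Q.edges.getLast?).map G.r).getD Q.src
        rw [hQE]
        cases hte : t ++ P.edges with
        | nil => simp [FinPath.rng, hQE, hte]
        | cons a l =>
          rcases hgl : (a :: l).getLast? with _ | y
          · simp at hgl
          · simp [FinPath.rng, hQE, hte, hgl]
      refine ⟨⟨Sum.inl pmF, ?_⟩, τ, rfl, ⟨?_, ?_, ?_⟩, ⟨?_, ?_, ?_⟩⟩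
      · intro ξ hξ
        injection hξ with hh
        subst hh
        rw [hpmrng]
        exact hq Q rfl
      · rfl
      · rw [h2.1]; exact hsrc.symm
      · rw [hQE]; rfl
      · rw [hτrng]; exact h1
      · rfl
      · rfl
  | inr Q =>
    cases p1 with
    | inl P => exact h2.elim
    | inr P =>
      have hQ0 : Q.edges 0 = e := by
        have h0 : (0 : ℕ) < μ.edges.length := by rw [he]; simp
        have := h2.1 0 h0
        rw [this]
        have : μ.edges.get ⟨0, h0⟩ = e := by simp [he]
        exact this
      set pmI : G.InfPath := ⟨fun i => Q.edges (1 + i), fun n => Q.chain (1 + n)⟩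
        with hpmdef
      refine ⟨⟨Sum.inr pmI, by intro ξ hξ; cases hξ⟩, τ, rfl,
        ⟨?_, ?_, ?_⟩, ⟨?_, ?_, ?_⟩⟩
      · show G.r e = G.s (Q.edges (1 + 0))
        rw [← hQ0]
        exact Q.chain 0
      · intro i hi
        match i, hi with
        | 0, _ => exact hQ0
      · intro i
        rfl
      · rw [hτrng]; exact h1
      · intro i hi
        have hi' : i < t.length := hi
        have hlt : i + 1 < μ.edges.length := by rw [he]; simp; omega
        have e1 : Q.edges (i + 1) = μ.edges.get ⟨i + 1, hlt⟩ := h2.1 (i + 1) hlt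
        have e2 : pmI.edges i = Q.edges (i + 1) := by
          show Q.edges (1 + i) = _
          rw [Nat.add_comm]
        rw [e2, e1, List.get_of_eq he ⟨i + 1, hlt⟩]
        rfl
      · intro i
        have hlen : μ.edges.length = t.length + 1 := by rw [he]; rfl
        have harith : 1 + (t.length + i) = μ.edges.length + i := by omega
        show Q.edges (1 + (t.length + i)) = P.edges i
        rw [harith]
        exact h2.2 i

theorem isCat_comp_aux : ∀ (l : List G.E) (μ ν : G.FinPath) (p q r0 : G.BPath),
    μ.edges = l → IsCat μ q r0 → IsCat ν p q →
    ∃ τ : G.FinPath, τ.length = μ.length + ν.length ∧ IsCat τ p r0 := by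
  intro l
  induction l with
  | nil =>
    intro μ ν p q r0 hl h1 h2
    obtain rfl := isCat_of_nil h1 hl
    exact ⟨ν, by simp [FinPath.length, hl], h2⟩
  | cons e t ih =>
    intro μ ν p q r0 hl h1 h2
    obtain ⟨pm, τ, hτ, hsing, htail⟩ := isCat_strip h1 hl
    obtain ⟨τ₂, hlen, hcat⟩ := ih τ ν p q pm hτ htail h2
    obtain ⟨τ₃, hlen3, hcat3⟩ := isCat_cons hsing hcat
    refine ⟨τ₃, ?_, hcat3⟩
    have l1 : τ.length = t.length := by simp [FinPath.length, hτ]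
    have l2 : μ.length = t.length + 1 := by simp [FinPath.length, hl]
    omega

theorem isCat_comp {μ ν : G.FinPath} {p q r0 : G.BPath}
    (h1 : IsCat μ q r0) (h2 : IsCat ν p q) :
    ∃ τ : G.FinPath, τ.length = μ.length + ν.length ∧ IsCat τ p r0 :=
  isCat_comp_aux μ.edges μ ν p q r0 rfl h1 h2

theorem isCat_prefix_aux : ∀ (l : List G.E) (μ₁ μ₂ : G.FinPath) (p₁ p₂ y : G.BPath),
    μ₁.edges = l → IsCat μ₁ p₁ y → IsCat μ₂ p₂ y → μ₁.length ≤ μ₂.length →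
    ∃ σ : G.FinPath, (σ.length : ℤ) = (μ₂.length : ℤ) - (μ₁.length : ℤ) ∧
      IsCat σ p₂ p₁ := by
  intro l
  induction l with
  | nil =>
    intro μ₁ μ₂ p₁ p₂ y hl h1 h2 hle
    obtain rfl := isCat_of_nil h1 hl
    refine ⟨μ₂, ?_, h2⟩
    have : μ₁.length = 0 := by simp [FinPath.length, hl]
    omega
  | cons e t ih =>
    intro μ₁ μ₂ p₁ p₂ y hl h1 h2 hle
    have hlen1 : μ₁.length = t.length + 1 := by simp [FinPath.length, hl]
    cases hl2 : μ₂.edges with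
    | nil =>
      have : μ₂.length = 0 := by simp [FinPath.length, hl2]
      omega
    | cons f t' =>
      have hlen2 : μ₂.length = t'.length + 1 := by simp [FinPath.length, hl2]
      obtain ⟨pm₁, τ₁, hτ₁, hs₁, ht₁⟩ := isCat_strip h1 hl
      obtain ⟨pm₂, τ₂, hτ₂, hs₂, ht₂⟩ := isCat_strip h2 hl2
      obtain ⟨-, hpm⟩ := isCat_single_unique hs₁ hs₂
      subst hpm
      have hτlen1 : τ₁.length = t.length := by simp [FinPath.length, hτ₁]
      have hτlen2 : τ₂.length = t'.length := by simp [FinPath.length, hτ₂]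
      obtain ⟨σ, hσ, hcat⟩ := ih τ₁ τ₂ p₁ p₂ pm₁ hτ₁ ht₁ ht₂ (by omega)
      exact ⟨σ, by omega, hcat⟩

theorem rational_of_two_decomps {x p : G.BPath} {α β : G.FinPath}
    (hα : IsCat α p x) (hβ : IsCat β p x) (hlt : α.length < β.length) :
    IsRational x := by
  obtain ⟨σ, hσlen, hσ⟩ := isCat_prefix_aux α.edges α β p p x rfl hα hβ hlt.le
  refine ⟨σ, p, by omega, hσ, ⟨(β.length : ℤ), β, vertexPath G p.src, p, hβ, isCat_id p, ?_⟩⟩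
  simp

theorem lag_eq_aux {x y : G.BPath} (hx : ¬ IsRational x) {μ₁ ν₁ μ₂ ν₂ : G.FinPath}
    {p₁ p₂ : G.BPath} (hle : μ₁.length ≤ μ₂.length)
    (hμ₁ : IsCat μ₁ p₁ y) (hν₁ : IsCat ν₁ p₁ x)
    (hμ₂ : IsCat μ₂ p₂ y) (hν₂ : IsCat ν₂ p₂ x) :
    (μ₁.length : ℤ) - (ν₁.length : ℤ) = (μ₂.length : ℤ) - (ν₂.length : ℤ) := by
  obtain ⟨σ, hσlen, hσ⟩ := isCat_prefix_aux μ₁.edges μ₁ μ₂ p₁ p₂ y rfl hμ₁ hμ₂ hle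
  obtain ⟨τ, hτlen, hτ⟩ := isCat_comp hν₁ hσ
  rcases lt_trichotomy τ.length ν₂.length with hc | hc | hc
  · exact absurd (rational_of_two_decomps hτ hν₂ hc) hx
  · omega
  · exact absurd (rational_of_two_decomps hν₂ hτ hc) hx

theorem tailEqLag_unique {x : G.BPath} (hx : ¬ IsRational x) {y : G.BPath} {k k' : ℤ}
    (h : TailEqLag y x k) (h' : TailEqLag y x k') : k = k' := by
  obtain ⟨μ₁, ν₁, p₁, hμ₁, hν₁, hk⟩ := h
  obtain ⟨μ₂, ν₂, p₂, hμ₂, hν₂, hk'⟩ := h'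
  rcases le_total μ₁.length μ₂.length with hle | hle
  · have := lag_eq_aux hx hle hμ₁ hν₁ hμ₂ hν₂
    omega
  · have := lag_eq_aux hx hle hμ₂ hν₂ hμ₁ hν₁
    omega

theorem tailEqLag_cons {x p q : G.BPath} {e : G.E} {k : ℤ}
    (h : TailEqLag p x k) (hc : IsCat (singleE G e) p q) : TailEqLag q x (k + 1) := by
  obtain ⟨μ, ν, p', h1, h2, hk⟩ := h
  obtain ⟨τ, hlen, hcat⟩ := isCat_cons hc h1
  exact ⟨τ, ν, p', hcat, h2, by omega⟩

theorem tailEqLag_strip {x p q : G.BPath} {e : G.E} {k : ℤ}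
    (h : TailEqLag q x k) (hc : IsCat (singleE G e) p q) : TailEqLag p x (k - 1) := by
  obtain ⟨μ, ν, p', h1, h2, hk⟩ := h
  cases hμ : μ.edges with
  | nil =>
    obtain rfl := isCat_of_nil h1 hμ
    obtain ⟨τ, hlen, hcat⟩ := isCat_comp h2 hc
    refine ⟨vertexPath G p.src, τ, p, isCat_id p, hcat, ?_⟩
    have l0 : μ.length = 0 := by simp [FinPath.length, hμ]
    have l3 : (singleE G e).length = 1 := rfl
    have l4 : (vertexPath G p.src).length = 0 := rfl
    omega
  | cons f t =>
    obtain ⟨pm, τ, hτ, hsing, htail⟩ := isCat_strip h1 hμ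
    obtain ⟨-, hpm⟩ := isCat_single_unique hc hsing
    subst hpm
    refine ⟨τ, ν, p', htail, h2, ?_⟩
    have l1 : τ.length = t.length := by simp [FinPath.length, hτ]
    have l2 : μ.length = t.length + 1 := by simp [FinPath.length, hμ]
    omega

set_option linter.unusedSectionVars false

section ModulePart

variable {K : Type} [Field K] {a : G.E → K} {x : G.BPath}
variable {M : Type} [AddCommGroup M] [Module K M] [Module (LPA G K) M]
  [IsScalarTower K (LPA G K) M]

theorem lpa_smul_comm (η : LPA G K) (c : K) (w : M) :
    η • (c • w) = c • (η • w) := by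
  rw [← algebraMap_smul (LPA G K) c w, ← mul_smul, ← Algebra.commutes c η, mul_smul,
    algebraMap_smul]

theorem basis_mem_chenW (sp : ChenSpec G K a x M) {p : orbit x} {k : ℤ}
    (hp : TailEqLag (p : G.BPath) x k) : sp.basis p ∈ chenW sp.basis k :=
  Submodule.subset_span ⟨p, hp, rfl⟩

theorem gen_smul_mem (sp : ChenSpec G K a x M) (g : LPA G K) (d : ℤ)
    (hb : ∀ (p : orbit x) (k : ℤ), TailEqLag (p : G.BPath) x k →
      g • sp.basis p ∈ chenW sp.basis (k + d)) :
    ∀ (k : ℤ) (w : M), w ∈ chenW sp.basis k → g • w ∈ chenW sp.basis (k + d) := by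
  intro k w hw
  induction hw using Submodule.span_induction with
  | mem m hm =>
    obtain ⟨p, hp, rfl⟩ := hm
    exact hb p k hp
  | zero => rw [smul_zero]; exact Submodule.zero_mem _
  | add y z hy hz ihy ihz => rw [smul_add]; exact Submodule.add_mem _ ihy ihz
  | smul c y hy ihy => rw [lpa_smul_comm]; exact Submodule.smul_mem _ c ihy

theorem ofV_smul_mem (sp : ChenSpec G K a x M) (v : G.V) :
    ∀ (k : ℤ) (w : M), w ∈ chenW sp.basis k → ofV G K v • w ∈ chenW sp.basis k := by
  intro k w hw
  have h := gen_smul_mem sp (ofV G K v) 0 ?_ k w hw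
  · rwa [add_zero] at h
  · intro p k' hp
    rw [add_zero, sp.act_v v p]
    split_ifs
    · exact basis_mem_chenW sp hp
    · exact Submodule.zero_mem _

theorem ofE_smul_mem (sp : ChenSpec G K a x M) (e : G.E) :
    ∀ (k : ℤ) (w : M), w ∈ chenW sp.basis k →
      ofE G K e • w ∈ chenW sp.basis (k + 1) := by
  refine gen_smul_mem sp (ofE G K e) 1 ?_
  intro p k hp
  by_cases hq : ∃ q : G.BPath, IsCat (singleE G e) (p : G.BPath) q
  · obtain ⟨q, hcq⟩ := hq
    have hqlag : TailEqLag q x (k + 1) := tailEqLag_cons hp hcq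
    rw [sp.act_e e p ⟨q, ⟨k + 1, hqlag⟩⟩ hcq]
    exact Submodule.smul_mem _ _ (basis_mem_chenW sp hqlag)
  · rw [sp.act_e_zero e p hq]
    exact Submodule.zero_mem _

theorem ofG_smul_mem (sp : ChenSpec G K a x M) (e : G.E) :
    ∀ (k : ℤ) (w : M), w ∈ chenW sp.basis k →
      ofG G K e • w ∈ chenW sp.basis (k + (-1)) := by
  refine gen_smul_mem sp (ofG G K e) (-1) ?_
  intro p k hp
  by_cases hq : ∃ p0 : G.BPath, IsCat (singleE G e) p0 (p : G.BPath)
  · obtain ⟨p0, hc⟩ := hq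
    have hlag : TailEqLag p0 x (k - 1) := tailEqLag_strip hp hc
    rw [sp.act_g e ⟨p0, ⟨k - 1, hlag⟩⟩ p hc]
    have hmem := basis_mem_chenW sp (p := ⟨p0, ⟨k - 1, hlag⟩⟩) hlag
    have := Submodule.smul_mem _ ((a e)⁻¹) hmem
    rwa [show k + (-1 : ℤ) = k - 1 by ring]
  · rw [sp.act_g_zero e p hq]
    exact Submodule.zero_mem _

theorem edges_prod_smul_mem (sp : ChenSpec G K a x M) :
    ∀ (l : List G.E) (k : ℤ) (w : M), w ∈ chenW sp.basis k →
      (l.map (ofE G K)).prod • w ∈ chenW sp.basis (k + l.length) := by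
  intro l
  induction l with
  | nil =>
    intro k w hw
    simpa using hw
  | cons e t ih =>
    intro k w hw
    have h1 := ih k w hw
    have h2 := ofE_smul_mem sp e _ _ h1
    have harith : k + (((e :: t).length : ℕ) : ℤ) = (k + t.length) + 1 := by
      push_cast [List.length_cons]
      ring
    rw [List.map_cons, List.prod_cons, mul_smul, harith]
    exact h2

theorem ghosts_prod_smul_mem (sp : ChenSpec G K a x M) :
    ∀ (l : List G.E) (k : ℤ) (w : M), w ∈ chenW sp.basis k →
      (l.map (ofG G K)).prod • w ∈ chenW sp.basis (k - l.length) := by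
  intro l
  induction l with
  | nil =>
    intro k w hw
    simpa using hw
  | cons e t ih =>
    intro k w hw
    have h1 := ih k w hw
    have h2 := ofG_smul_mem sp e _ _ h1
    have harith : k - (((e :: t).length : ℕ) : ℤ) = (k - t.length) + (-1) := by
      push_cast [List.length_cons]
      ring
    rw [List.map_cons, List.prod_cons, mul_smul, harith]
    exact h2

theorem pathElem_smul_mem (sp : ChenSpec G K a x M) (μ : G.FinPath) (k : ℤ) (w : M)
    (hw : w ∈ chenW sp.basis k) :
    pathElem G K μ • w ∈ chenW sp.basis (k + μ.length) := by
  rw [pathElem, mul_smul]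
  exact ofV_smul_mem sp μ.src _ _ (edges_prod_smul_mem sp μ.edges k w hw)

theorem pathStarElem_smul_mem (sp : ChenSpec G K a x M) (ν : G.FinPath) (k : ℤ) (w : M)
    (hw : w ∈ chenW sp.basis k) :
    pathStarElem G K ν • w ∈ chenW sp.basis (k - ν.length) := by
  rw [pathStarElem, mul_smul]
  have h1 := ofV_smul_mem sp ν.src k w hw
  have h2 := ghosts_prod_smul_mem sp ν.edges.reverse k _ h1
  rwa [List.length_reverse] at h2

end ModulePart

end DirGraph

open DirGraph

/-- for `x ∈ ∂E` not rational and `a ∈ (K^*)^{E¹}`, the twisted Chen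
module `V_{[x]}^a` is a `ℤ`-graded `L_K(E)`-module: the sets `[x]_k` are pairwise
disjoint, `V_{[x]}^a = ⊕_k V_{[x],k}` where `V_{[x],k}` is the span of `[x]_k`, and
`(L_K(E))_m ⬝ V_{[x],k} ⊆ V_{[x],m+k}`. -/
theorem stmt_1 (G : DirGraph) (K : Type) [Field K] (a : G.E → K)
    (x : G.BPath) (hx : ¬ IsRational x)
    (M : Type) [AddCommGroup M] [Module K M] [Module (LPA G K) M]
    [IsScalarTower K (LPA G K) M]
    (sp : ChenSpec G K a x M) :
    (∀ (k k' : ℤ) (y : G.BPath), TailEqLag y x k → TailEqLag y x k' → k = k') ∧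
      DirectSum.IsInternal (fun k => chenW sp.basis k) ∧
      (∀ (m k : ℤ) (η : LPA G K) (w : M), η ∈ LPAdeg G K m → w ∈ chenW sp.basis k →
        η • w ∈ chenW sp.basis (m + k)) := by
  have huniq : ∀ (k k' : ℤ) (y : G.BPath), TailEqLag y x k → TailEqLag y x k' → k = k' :=
    fun k k' y h h' => tailEqLag_unique hx h h'
  refine ⟨huniq, ?_, ?_⟩
  · -- direct sum decomposition
    have hT : ∀ j : ℤ, chenW sp.basis j ≤
        (Finsupp.supported K K {p : orbit x | TailEqLag (p : G.BPath) x j}).comap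
          sp.basis.repr.toLinearMap := by
      intro j
      rw [chenW, Submodule.span_le]
      rintro w ⟨p, hp, rfl⟩
      show sp.basis.repr (sp.basis p) ∈ Finsupp.supported K K _
      rw [Module.Basis.repr_self]
      exact Finsupp.single_mem_supported K 1 hp
    apply DirectSum.isInternal_submodule_of_iSupIndep_of_iSup_eq_top
    · intro k
      have h2 : (⨆ (j) (_ : j ≠ k), chenW sp.basis j) ≤
          (Finsupp.supported K K {p : orbit x | TailEqLag (p : G.BPath) x k}ᶜ).comap
            sp.basis.repr.toLinearMap := by
        refine iSup₂_le fun j hj => (hT j).trans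
          (Submodule.comap_mono (Finsupp.supported_mono ?_))
        intro p hp hpk
        exact hj (huniq j k p hp hpk)
      rw [Submodule.disjoint_def]
      intro w hw1 hw2
      have m1 : sp.basis.repr w ∈
          Finsupp.supported K K {p : orbit x | TailEqLag (p : G.BPath) x k} := hT k hw1
      have m2 : sp.basis.repr w ∈
          Finsupp.supported K K {p : orbit x | TailEqLag (p : G.BPath) x k}ᶜ := h2 hw2
      have hz : sp.basis.repr w = 0 := by
        have hdc : Disjoint {p : orbit x | TailEqLag (p : G.BPath) x k}
            {p : orbit x | TailEqLag (p : G.BPath) x k}ᶜ := disjoint_compl_right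
        have hd := Finsupp.disjoint_supported_supported (M := K) (R := K) hdc
        exact (Submodule.disjoint_def.mp hd) _ m1 m2
      exact sp.basis.repr.map_eq_zero_iff.mp hz
    · rw [eq_top_iff, ← sp.basis.span_eq, Submodule.span_le]
      rintro w ⟨p, rfl⟩
      obtain ⟨k, hk⟩ := p.2
      exact Submodule.mem_iSup_of_mem k (basis_mem_chenW sp hk)
  · intro m k η w hη hw
    induction hη using Submodule.span_induction with
    | mem g hg =>
      obtain ⟨μ, ν, -, hlen, rfl⟩ := hg
      rw [mul_smul]
      have h1 := pathStarElem_smul_mem sp ν k w hw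
      have h2 := pathElem_smul_mem sp μ _ _ h1
      have harith : (k - (ν.length : ℤ)) + μ.length = m + k := by omega
      rwa [harith] at h2
    | zero => rw [zero_smul]; exact Submodule.zero_mem _
    | add y z hy hz ihy ihz => rw [add_smul]; exact Submodule.add_mem _ ihy ihz
    | smul c y hy ihy => rw [smul_assoc]; exact Submodule.smul_mem _ c ihy
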